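/- If Φ : unit sphere of ℂ² → ℝ³ is any map of the form Φ(ψ)ᵢ = ⟨ψ|Aᵢ|ψ⟩ for Hermitian 2×2 matrices A₁, A₂, A₃, and Φ is SU(2)-equivariant in the sense that for every U ∈ SU(2) there is R_U ∈ O(3) with Φ(Uψ) = R_U Φ(ψ) for all ψ, and the image of Φ contains the unit sphere S², then each Aᵢ has constant trace term equal and the traceless parts of A₁, A₂, A₃ are obtained from the Pauli matrices by a fixed orthogonal transformation composed with a common nonzero scaling; i.e., Φ agrees with the Bloch map up to a rotation, scaling, and common translation. -/

import Mathlib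

open Matrix Complex

/-- The Pauli matrices. -/
noncomputable def pauli : Fin 3 → Matrix (Fin 2) (Fin 2) ℂ :=
  ![!![0, 1; 1, 0], !![0, -I; I, 0], !![1, 0; 0, -1]]

/-- The Bloch map. -/
noncomputable def bloch (ψ : Fin 2 → ℂ) (j : Fin 3) : ℝ :=
  (star ψ ⬝ᵥ (pauli j).mulVec ψ).re

lemma bloch_norm (ψ : Fin 2 → ℂ) (h : ∑ i : Fin 2, ‖ψ i‖ ^ 2 = 1) :
    ∑ j, bloch ψ j ^ 2 = 1 := by
  have h' : (ψ 0).re*(ψ 0).re + (ψ 0).im*(ψ 0).im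
      + ((ψ 1).re*(ψ 1).re + (ψ 1).im*(ψ 1).im) = 1 := by
    simpa [Fin.sum_univ_two, Complex.sq_norm, Complex.normSq_apply] using h
  simp only [Fin.sum_univ_three, bloch, pauli]
  simp [mulVec, dotProduct, Fin.sum_univ_two, Complex.add_re, Complex.mul_re,
    Complex.mul_im, Complex.I_re, Complex.I_im]
  nlinarith [h', sq_nonneg ((ψ 0).re*(ψ 1).im - (ψ 0).im*(ψ 1).re)]

lemma decomp (A : Matrix (Fin 2) (Fin 2) ℂ) (hA : A.IsHermitian) :
    ∃ (t : ℝ) (c : Fin 3 → ℝ),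
      A = (t : ℂ) • (1 : Matrix (Fin 2) (Fin 2) ℂ) + ∑ j, (c j : ℂ) • pauli j := by
  refine ⟨((A 0 0).re + (A 1 1).re)/2,
    ![(A 0 1).re, -(A 0 1).im, ((A 0 0).re - (A 1 1).re)/2], ?_⟩
  have h00 : A 0 0 = star (A 0 0) := (congrFun (congrFun hA 0) 0).symm
  have h11 : A 1 1 = star (A 1 1) := (congrFun (congrFun hA 1) 1).symm
  have h10 : A 1 0 = star (A 0 1) := (congrFun (congrFun hA 1) 0).symm
  have h00im : (A 0 0).im = 0 := by
    have := congrArg Complex.im h00; simp [Complex.star_def] at this; linarith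
  have h11im : (A 1 1).im = 0 := by
    have := congrArg Complex.im h11; simp [Complex.star_def] at this; linarith
  ext i j
  fin_cases i <;> fin_cases j <;>
    simp [pauli, Fin.sum_univ_three, Matrix.one_apply, h10] <;>
    apply Complex.ext <;>
    simp [h00im, h11im] <;> ring

lemma form_eq (t : ℝ) (c : Fin 3 → ℝ) (ψ : Fin 2 → ℂ)
    (h : ∑ i : Fin 2, ‖ψ i‖ ^ 2 = 1) :
    (star ψ ⬝ᵥ ((t : ℂ) • (1 : Matrix (Fin 2) (Fin 2) ℂ)
        + ∑ j, (c j : ℂ) • pauli j).mulVec ψ).re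
      = t + ∑ j, c j * bloch ψ j := by
  have h' : (ψ 0).re*(ψ 0).re + (ψ 0).im*(ψ 0).im
      + ((ψ 1).re*(ψ 1).re + (ψ 1).im*(ψ 1).im) = 1 := by
    simpa [Fin.sum_univ_two, Complex.sq_norm, Complex.normSq_apply] using h
  simp only [bloch, pauli, Fin.sum_univ_three]
  simp [mulVec, dotProduct, Fin.sum_univ_two, Matrix.one_apply, Matrix.add_apply,
    Matrix.smul_apply, Complex.add_re, Complex.mul_re, Complex.mul_im,
    Complex.I_re, Complex.I_im, Complex.star_def]
  linear_combination t * h'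

set_option maxHeartbeats 1000000 in
lemma key (t : Fin 3 → ℝ) (C : Matrix (Fin 3) (Fin 3) ℝ)
    (h : ∀ v : Fin 3 → ℝ, (∑ i, v i ^ 2 = 1) →
      ∃ w : Fin 3 → ℝ, (∑ j, w j ^ 2 = 1) ∧ ∀ i, v i = t i + ∑ j, C i j * w j) :
    t = 0 ∧ Cᵀ * C = 1 := by
  have hker : ∀ n : Fin 3 → ℝ, n ᵥ* C = 0 → n = 0 := by
    intro n hn
    by_contra hn0
    have hpos : 0 < ∑ i, n i ^ 2 := by
      have hex : ∃ i, n i ≠ 0 := by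
        by_contra hc; push_neg at hc; exact hn0 (funext hc)
      obtain ⟨i, hi⟩ := hex
      have h1 : 0 < n i ^ 2 := by positivity
      exact lt_of_lt_of_le h1 (Finset.single_le_sum (fun j _ => sq_nonneg (n j))
        (Finset.mem_univ i))
    set m := Real.sqrt (∑ i, n i ^ 2) with hm
    have hm0 : 0 < m := Real.sqrt_pos.2 hpos
    have hmsq : m ^ 2 = ∑ i, n i ^ 2 := Real.sq_sqrt hpos.le
    have hn0' := congrFun hn 0
    have hn1' := congrFun hn 1
    have hn2' := congrFun hn 2
    simp only [vecMul, dotProduct, Fin.sum_univ_three, Pi.zero_apply] at hn0' hn1' hn2'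
    have key' : ∀ v : Fin 3 → ℝ, (∑ i, v i ^ 2 = 1) → ∑ i, n i * v i = ∑ i, n i * t i := by
      intro v hv
      obtain ⟨w, -, hw⟩ := h v hv
      simp only [Fin.sum_univ_three, hw 0, hw 1, hw 2]
      linear_combination (w 0) * hn0' + (w 1) * hn1' + (w 2) * hn2'
    have hu1 : ∑ i, (n i / m) ^ 2 = 1 := by
      simp only [div_pow]
      rw [← Finset.sum_div, ← hmsq, div_self (by positivity)]
    have hu2 : ∑ i, (-(n i / m)) ^ 2 = 1 := by simpa only [neg_sq] using hu1
    have h1 := key' _ hu1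
    have h2 := key' _ hu2
    have hval : ∑ i, n i * (n i / m) = m := by
      have e1 : ∑ i, n i * (n i / m) = (∑ i, n i ^ 2) / m := by
        rw [Finset.sum_div]; exact Finset.sum_congr rfl fun i _ => by rw [sq]; ring
      rw [e1, ← hmsq, sq, mul_div_assoc, div_self hm0.ne', mul_one]
    have h2' : ∑ i, n i * (-(n i / m)) = -∑ i, n i * (n i / m) := by
      simp only [Fin.sum_univ_three]; ring
    rw [hval] at h1
    rw [h2', hval] at h2
    linarith
  have hinj : Function.Injective C.vecMul := by
    intro a b hab
    have hab' : a ᵥ* C = b ᵥ* C := hab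
    have hz : (a - b) ᵥ* C = 0 := by
      rw [Matrix.sub_vecMul, hab', sub_self]
    exact sub_eq_zero.mp (hker _ hz)
  have hC : IsUnit C := vecMul_injective_iff_isUnit.mp hinj
  have hdet : IsUnit C.det := (Matrix.isUnit_iff_isUnit_det C).mp hC
  set D := C⁻¹ with hD
  have hCD : C * D = 1 := Matrix.mul_nonsing_inv C hdet
  have hDC : D * C = 1 := Matrix.nonsing_inv_mul C hdet
  set u := D.mulVec t with hu
  have F : ∀ v : Fin 3 → ℝ, (∑ i, v i ^ 2 = 1) →
      ∑ j, ((D.mulVec v) j - u j) ^ 2 = 1 := by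
    intro v hv
    obtain ⟨w, hw1, hw⟩ := h v hv
    have hCw : C.mulVec w = fun i => v i - t i := by
      ext i
      simp only [mulVec, dotProduct]
      rw [hw i]; ring
    have hDvt : ∀ j, (D.mulVec v) j - u j = w j := by
      have e1 : D.mulVec (fun i => v i - t i) = w := by
        rw [← hCw, Matrix.mulVec_mulVec, hDC, Matrix.one_mulVec]
      intro j
      have e2 := congrFun e1 j
      simp only [mulVec, dotProduct, hu] at e2 ⊢
      rw [← e2]
      simp only [mul_sub, Finset.sum_sub_distrib]
    calc ∑ j, ((D.mulVec v) j - u j) ^ 2 = ∑ j, w j ^ 2 :=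
          Finset.sum_congr rfl fun j _ => by rw [hDvt j]
      _ = 1 := hw1
  have Fc : ∀ v : Fin 3 → ℝ, v 0 ^ 2 + v 1 ^ 2 + v 2 ^ 2 = 1 →
      (D 0 0 * v 0 + D 0 1 * v 1 + D 0 2 * v 2 - u 0) ^ 2
      + (D 1 0 * v 0 + D 1 1 * v 1 + D 1 2 * v 2 - u 1) ^ 2
      + (D 2 0 * v 0 + D 2 1 * v 1 + D 2 2 * v 2 - u 2) ^ 2 = 1 := by
    intro v hv
    have := F v (by simpa [Fin.sum_univ_three] using hv)
    simpa [Fin.sum_univ_three, mulVec, dotProduct] using this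
  have fe0 := Fc ![1,0,0] (by simp)
  have fe0' := Fc ![-1,0,0] (by simp)
  have fe1 := Fc ![0,1,0] (by simp)
  have fe1' := Fc ![0,-1,0] (by simp)
  have fe2 := Fc ![0,0,1] (by simp)
  have fe2' := Fc ![0,0,-1] (by simp)
  simp only [Matrix.cons_val_zero, Matrix.cons_val_one, Matrix.head_cons,
    Matrix.cons_val_two, Matrix.tail_cons] at fe0 fe0' fe1 fe1' fe2 fe2'
  have hud0 : u 0 * D 0 0 + u 1 * D 1 0 + u 2 * D 2 0 = 0 := by
    linear_combination (fe0' - fe0) / 4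
  have hud1 : u 0 * D 0 1 + u 1 * D 1 1 + u 2 * D 2 1 = 0 := by
    linear_combination (fe1' - fe1) / 4
  have hud2 : u 0 * D 0 2 + u 1 * D 1 2 + u 2 * D 2 2 = 0 := by
    linear_combination (fe2' - fe2) / 4
  have huD : u ᵥ* D = 0 := by
    funext i
    have e : (u ᵥ* D) i = u 0 * D 0 i + u 1 * D 1 i + u 2 * D 2 i := by
      simp [vecMul, dotProduct, Fin.sum_univ_three]
    rw [e, Pi.zero_apply]
    fin_cases i
    · exact hud0
    · exact hud1
    · exact hud2
  have hu0 : u = 0 := by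
    have e1 : (u ᵥ* D) ᵥ* C = u := by rw [Matrix.vecMul_vecMul, hDC, Matrix.vecMul_one]
    rw [huD, Matrix.zero_vecMul] at e1
    exact e1.symm
  have ht0 : t = 0 := by
    have e1 : C.mulVec u = t := by
      rw [hu, Matrix.mulVec_mulVec, hCD, Matrix.one_mulVec]
    rw [hu0, Matrix.mulVec_zero] at e1
    exact e1.symm
  rw [hu0] at fe0 fe1 fe2
  simp only [Pi.zero_apply, sub_zero] at fe0 fe1 fe2
  have d0 : D 0 0 * D 0 0 + D 1 0 * D 1 0 + D 2 0 * D 2 0 = 1 := by linear_combination fe0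
  have d1 : D 0 1 * D 0 1 + D 1 1 * D 1 1 + D 2 1 * D 2 1 = 1 := by linear_combination fe1
  have d2 : D 0 2 * D 0 2 + D 1 2 * D 1 2 + D 2 2 * D 2 2 = 1 := by linear_combination fe2
  set r : ℝ := (Real.sqrt 2)⁻¹ with hrdef
  have hr : r * r = 1/2 := by
    rw [hrdef, ← mul_inv, ← Real.sqrt_mul_self (by norm_num : (0:ℝ) ≤ 2)]
    norm_num
  have hrsq : r ^ 2 = 1/2 := by rw [sq]; exact hr
  have fm01 := Fc ![r,r,0] (by simp [hrsq]; norm_num)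
  have fm02 := Fc ![r,0,r] (by simp [hrsq]; norm_num)
  have fm12 := Fc ![0,r,r] (by simp [hrsq]; norm_num)
  simp only [Matrix.cons_val_zero, Matrix.cons_val_one, Matrix.head_cons,
    Matrix.cons_val_two, Matrix.tail_cons] at fm01 fm02 fm12
  rw [hu0] at fm01 fm02 fm12
  simp only [Pi.zero_apply, sub_zero] at fm01 fm02 fm12
  have g01 : D 0 0 * D 0 1 + D 1 0 * D 1 1 + D 2 0 * D 2 1 = 0 := by
    have E' : ((D 0 0 + D 0 1)^2 + (D 1 0 + D 1 1)^2 + (D 2 0 + D 2 1)^2) * (r*r) = 1 := by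
      linear_combination fm01
    rw [hr] at E'
    linear_combination E' - d0/2 - d1/2
  have g02 : D 0 0 * D 0 2 + D 1 0 * D 1 2 + D 2 0 * D 2 2 = 0 := by
    have E' : ((D 0 0 + D 0 2)^2 + (D 1 0 + D 1 2)^2 + (D 2 0 + D 2 2)^2) * (r*r) = 1 := by
      linear_combination fm02
    rw [hr] at E'
    linear_combination E' - d0/2 - d2/2
  have g12 : D 0 1 * D 0 2 + D 1 1 * D 1 2 + D 2 1 * D 2 2 = 0 := by
    have E' : ((D 0 1 + D 0 2)^2 + (D 1 1 + D 1 2)^2 + (D 2 1 + D 2 2)^2) * (r*r) = 1 := by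
      linear_combination fm12
    rw [hr] at E'
    linear_combination E' - d1/2 - d2/2
  clear h F Fc hker hinj fe0' fe1' fe2' fm01 fm02 fm12 hud0 hud1 hud2 fe0 fe1 fe2
  have hDtD : Dᵀ * D = 1 := by
    ext i j
    fin_cases i <;> fin_cases j <;>
      simp [Matrix.mul_apply, Fin.sum_univ_three, Matrix.one_apply] <;>
      linarith [d0, d1, d2, g01, g02, g12]
  have hC_eq : C = Dᵀ := by
    calc C = (Dᵀ * D) * C := by rw [hDtD, one_mul]
      _ = Dᵀ * (D * C) := by rw [Matrix.mul_assoc]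
      _ = Dᵀ := by rw [hDC, mul_one]
  refine ⟨ht0, ?_⟩
  rw [hC_eq, transpose_transpose, ← hC_eq, hDC]

theorem equivariant_projection_is_bloch_up_to_symmetry
    (A : Fin 3 → Matrix (Fin 2) (Fin 2) ℂ) (hA : ∀ i, (A i).IsHermitian)
    (Φ : (Fin 2 → ℂ) → Fin 3 → ℝ)
    (hΦ : ∀ ψ i, Φ ψ i = (star ψ ⬝ᵥ (A i).mulVec ψ).re)
    (hequiv : ∀ U : Matrix.specialUnitaryGroup (Fin 2) ℂ,
      ∃ R ∈ Matrix.orthogonalGroup (Fin 3) ℝ,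
        ∀ ψ : Fin 2 → ℂ, (∑ i : Fin 2, ‖ψ i‖ ^ 2 = 1) →
          ∀ i, Φ ((U : Matrix (Fin 2) (Fin 2) ℂ).mulVec ψ) i = ∑ j, R i j * Φ ψ j)
    (hsurj : ∀ v : Fin 3 → ℝ, (∑ i, v i ^ 2 = 1) →
      ∃ ψ : Fin 2 → ℂ, (∑ i : Fin 2, ‖ψ i‖ ^ 2 = 1) ∧ ∀ i, Φ ψ i = v i) :
    ∃ (t s : ℝ) (R : Matrix (Fin 3) (Fin 3) ℝ),
      R ∈ Matrix.orthogonalGroup (Fin 3) ℝ ∧ s ≠ 0 ∧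
      ∀ i, A i = (t : ℂ) • (1 : Matrix (Fin 2) (Fin 2) ℂ) +
        (s : ℂ) • ∑ j, (R i j : ℂ) • pauli j := by
  choose t c hdec using fun i => decomp (A i) (hA i)
  set Cm : Matrix (Fin 3) (Fin 3) ℝ := Matrix.of fun i j => c i j with hCm
  have hkey := key t Cm (by
    intro v hv
    obtain ⟨ψ, hψ, hΦv⟩ := hsurj v hv
    refine ⟨bloch ψ, bloch_norm ψ hψ, fun i => ?_⟩
    rw [← hΦv i, hΦ ψ i, hdec i, form_eq (t i) (c i) ψ hψ]
    rfl)
  obtain ⟨ht, hCC⟩ := hkey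
  refine ⟨0, 1, Cm, ?_, one_ne_zero, fun i => ?_⟩
  · rw [Matrix.mem_orthogonalGroup_iff']
    have hstar : star Cm = Cmᵀ := by
      ext i j
      simp [Matrix.star_apply]
    exact hCC
  · rw [hdec i, congrFun ht i]
    simp
    rfl
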